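/- An affine permutation f of period 2n is an electrical affine permutation for n if and only if f = f_τ for some matching τ of [2n]; moreover, the matching τ with f = f_τ is unique. -/

import Mathlib

open Finset

noncomputable section
open scoped Classical

/-- The cyclic (clockwise) half-open interval `(a, b]` in `Fin m`. -/
def cIoc {m : ℕ} (a b : Fin m) : Finset (Fin m) :=
  univ.filter fun k => if a < b then a < k ∧ k ≤ b else a < k ∨ k ≤ b

/-- The open cyclic (clockwise) arc from `a` to `b` in `Fin m`, excluding both endpoints. -/
def cIoo {m : ℕ} (a b : Fin m) : Finset (Fin m) :=
  univ.filter fun k => if a < b then a < k ∧ k < b else (a < k ∨ k < b) ∧ k ≠ a ∧ k ≠ b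

/-- Set partitions of `[n] = Fin n`. -/
abbrev NCP (n : ℕ) := Finpartition (univ : Finset (Fin n))

/-- `a` and `b` lie in the same block of `σ`. -/
def sameBlock {n : ℕ} (σ : NCP n) (a b : Fin n) : Prop :=
  ∃ B ∈ σ.parts, a ∈ B ∧ b ∈ B

/-- `σ` is a noncrossing partition: there are no `a < b < c < d` with `a, c` in one
block and `b, d` in a different block. -/
def IsNoncrossing {n : ℕ} (σ : NCP n) : Prop :=
  ∀ a b c d : Fin n, a < b → b < c → c < d →
    sameBlock σ a c → sameBlock σ b d → sameBlock σ a b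

/-- The relation defining the dual (Kreweras complement) partition: `ĩ ~ j̃` iff no block
of `σ` meets both cyclic intervals `{(i+1), …, j}` and `{(j+1), …, i}`. -/
def dualRel {n : ℕ} (σ : NCP n) (i j : Fin n) : Prop :=
  i = j ∨ ¬ ∃ B ∈ σ.parts, (B ∩ cIoc i j).Nonempty ∧ (B ∩ cIoc j i).Nonempty

/-- The point `ī` of `[2n]` (0-based: `ī = 2i`). -/
def bar {n : ℕ} (i : Fin n) : Fin (2*n) := ⟨2*(i:ℕ), by have := i.isLt; omega⟩

/-- The point `ĩ` of `[2n]` (0-based: `ĩ = 2i+1`). -/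
def til {n : ℕ} (i : Fin n) : Fin (2*n) := ⟨2*(i:ℕ)+1, by have := i.isLt; omega⟩

/-- A matching (fixed-point-free involution) of `Fin m`. -/
def IsMatching {m : ℕ} (τ : Fin m → Fin m) : Prop :=
  Function.Involutive τ ∧ ∀ i, τ i ≠ i

/-- A noncrossing matching: there are no `a < b < c < d` with `τ a = c` and `τ b = d`. -/
def IsNCMatching {m : ℕ} (τ : Fin m → Fin m) : Prop :=
  ¬ ∃ a b c d : Fin m, a < b ∧ b < c ∧ c < d ∧ τ a = c ∧ τ b = d

/-- `j` is the cyclic predecessor of `i` in the block of `σ` containing `i`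
(`j = i` when `i` is a singleton). -/
def cyclicPred {n : ℕ} (σ : NCP n) (j i : Fin n) : Prop :=
  ∃ B ∈ σ.parts, i ∈ B ∧ j ∈ B ∧ ∀ x ∈ B, x ∉ cIoo j i

/-- `m` is the medial pairing of `σ`: it pairs `ī` (0-based `2i`) with `j̃` (0-based `2j+1`),
where `j` is the cyclic predecessor of `i` in its block. -/
def IsMedialOf {n : ℕ} (σ : NCP n) (m : Fin (2*n) → Fin (2*n)) : Prop :=
  ∀ i j : Fin n, m (bar i) = til j ↔ cyclicPred σ j i

/-- The crossing number of a matching: the number of pairs `{a,b}` with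
`a < b < τ a < τ b`. -/
def crossNum {m : ℕ} (τ : Fin m → Fin m) : ℕ :=
  ((univ : Finset (Fin m × Fin m)).filter fun p =>
    p.1 < p.2 ∧ p.2 < τ p.1 ∧ τ p.1 < τ p.2).card

/-- `a`, `b`, `c`, `d` are distinct and in cyclic order on `Fin m`. -/
def CyclicOrder4 {m : ℕ} (a b c d : Fin m) : Prop :=
  (a < b ∧ b < c ∧ c < d) ∨ (b < c ∧ c < d ∧ d < a) ∨
  (c < d ∧ d < a ∧ a < b) ∨ (d < a ∧ a < b ∧ b < c)

/-- `τ` covers `τ'` in the uncrossing order. -/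
def UncrossCover {m : ℕ} (τ' τ : Fin m → Fin m) : Prop :=
  IsMatching τ' ∧ IsMatching τ ∧
  ∃ a b c d : Fin m, CyclicOrder4 a b c d ∧ τ a = c ∧ τ b = d ∧
    (∀ x, x ≠ a → x ≠ b → x ≠ c → x ≠ d → τ' x = τ x) ∧
    ((τ' a = d ∧ τ' b = c ∧ ∀ x ∈ cIoo a b, τ x ∉ cIoo c d) ∨
     (τ' a = b ∧ τ' c = d ∧ ∀ x ∈ cIoo b c, τ x ∉ cIoo d a))

/-- The uncrossing partial order on matchings: reflexive-transitive closure of covers. -/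
def uncrossLE {m : ℕ} (τ' τ : Fin m → Fin m) : Prop :=
  Relation.ReflTransGen UncrossCover τ' τ

/-- An affine permutation of period `m`. -/
def IsAffinePerm (m : ℕ) (f : ℤ → ℤ) : Prop :=
  Function.Bijective f ∧ ∀ i : ℤ, f (i + m) = f i + m

/-- The length of an affine permutation of period `m`:
`#{(i,j) : 1 ≤ i ≤ m, i < j, f i > f j}`. -/
def affLen (m : ℕ) (f : ℤ → ℤ) : ℕ :=
  Set.ncard {p : ℤ × ℤ | 1 ≤ p.1 ∧ p.1 ≤ (m:ℤ) ∧ p.1 < p.2 ∧ f p.2 < f p.1}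

/-- The affine rank matrix `r_f(i,j) = #{a ≤ i : f a ≥ j}`. -/
def rankMat (f : ℤ → ℤ) (i j : ℤ) : ℕ :=
  Set.ncard {a : ℤ | a ≤ i ∧ j ≤ f a}

/-- Affine Bruhat order via rank matrices. -/
def bruhatLE (f g : ℤ → ℤ) : Prop := ∀ i j : ℤ, rankMat f i j ≤ rankMat g i j

/-- The sum `Σ_{i=1}^m (f i − i)`. -/
def windowSum (m : ℕ) (f : ℤ → ℤ) : ℤ :=
  ∑ i ∈ Finset.range m, (f ((i:ℤ)+1) - ((i:ℤ)+1))

/-- The affine permutation `g_τ` associated to a matching `τ` of `[2n]`: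
on `[2n]`, `g_τ i = τ i` if `τ i > i` and `g_τ i = τ i + 2n` if `τ i < i`,
extended periodically. -/
def gTau (n : ℕ) (τ : Fin (2*n) → Fin (2*n)) (i : ℤ) : ℤ :=
  if h : (i % ((2*n : ℕ) : ℤ)).toNat < 2*n then
    let r : Fin (2*n) := ⟨(i % ((2*n : ℕ) : ℤ)).toNat, h⟩
    (i - i % ((2*n : ℕ) : ℤ)) +
      (if r < τ r then ((τ r : ℕ) : ℤ) else ((τ r : ℕ) : ℤ) + 2*n)
  else i

/-- `f_τ = g_τ − 1`. -/
def fTau (n : ℕ) (τ : Fin (2*n) → Fin (2*n)) (i : ℤ) : ℤ := gTau n τ i - 1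

/-- An electrical affine permutation for `n`. -/
def IsElectrical (n : ℕ) (f : ℤ → ℤ) : Prop :=
  IsAffinePerm (2*n) f ∧
  (∀ i : ℤ, i ≤ f i ∧ f i ≤ i + 2*n - 2) ∧
  windowSum (2*n) f = ((n:ℤ) - 1) * (2*n) ∧
  ∀ i : ℤ, (f (f i + 1) - (i - 1)) % ((2*n : ℕ) : ℤ) = 0

/-- The Grassmann necklace subset `I_a(f) ⊆ [m]`: representatives in `[m]` (0-based) of
`{f b mod m : b < a and f b ≥ a}`. -/
def necklaceI (m : ℕ) (f : ℤ → ℤ) (a : ℤ) : Finset (Fin m) :=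
  univ.filter fun x => ∃ b : ℤ, b < a ∧ a ≤ f b ∧ f b % (m:ℤ) = ((x:ℕ):ℤ)

/-- The dual necklace subset `J_a(f) ⊆ [m]`: representatives in `[m]` (0-based) of
`{b mod m : b < a and f b ≥ a}`. -/
def necklaceJ (m : ℕ) (f : ℤ → ℤ) (a : ℤ) : Finset (Fin m) :=
  univ.filter fun x => ∃ b : ℤ, b < a ∧ a ≤ f b ∧ b % (m:ℤ) = ((x:ℕ):ℤ)

/-- Dominance order on `k`-element subsets of `Fin m`:
the `r`-th smallest element of `I` is at most the `r`-th smallest element of `J`. -/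
def domLE {m : ℕ} (k : ℕ) (I J : Finset (Fin m)) : Prop :=
  ∃ (hI : I.card = k) (hJ : J.card = k),
    ∀ r : Fin k, I.orderEmbOfFin hI r ≤ J.orderEmbOfFin hJ r

/-- `a`-shifted dominance order: rotate so that `a` becomes least, then compare. -/
def sdomLE {m : ℕ} (k : ℕ) (a : Fin m) (I J : Finset (Fin m)) : Prop :=
  domLE k (I.image (· - a)) (J.image (· - a))

/-- `a`-shifted lexicographic order on subsets of `Fin m`. -/
def lexLE {m : ℕ} (a : Fin m) (I J : Finset (Fin m)) : Prop :=
  I = J ∨ List.Lex (· < ·) ((I.image (· - a)).sort (· ≤ ·)) ((J.image (· - a)).sort (· ≤ ·))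

/-- A Catalan subset of `[2n]` (0-based): an `(n−1)`-subset such that the length-`2n`
word with `U` at positions `{0} ∪ {x+1 : x ∈ I}` and `D` elsewhere is a Dyck path. -/
def IsCatalan {n : ℕ} (I : Finset (Fin (2*n))) : Prop :=
  I.card = n - 1 ∧
  ∀ p : ℕ, p ≤ 2*n →
    p ≤ 2 * ((insert 0 (I.image fun x => (x:ℕ)+1)).filter (· < p)).card

/-- Catalan subset with respect to the shifted order `≤_a`. -/
def IsCatalanAt {n : ℕ} (a : Fin (2*n)) (I : Finset (Fin (2*n))) : Prop :=
  IsCatalan (I.image (· - a))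

/-- The set of maxima of `S` with respect to the `a`-shifted order. -/
def maxAt {m : ℕ} (a : Fin m) (S : Finset (Fin m)) : Finset (Fin m) :=
  S.filter fun x => ∀ y ∈ S, y - a ≤ x - a

/-- `I_a(σ)` for a noncrossing partition `σ`: the complement in `[2n]` of the set of
`≤_a`-maxima of the blocks of `σ` (embedded by `bar`) and of the blocks of the dual
partition `σ̃` (embedded by `til`). -/
def IaP {n : ℕ} (σ : NCP n) (a : Fin (2*n)) : Finset (Fin (2*n)) :=
  univ \ ((σ.parts.biUnion fun B => maxAt a (B.image bar)) ∪
          ((univ : Finset (Fin n)).biUnion fun i =>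
            maxAt a ((univ.filter (dualRel σ i)).image til)))

/-- `I` is concordant with `σ`: `I` has `n−1` elements and every block of `σ` and of
its dual `σ̃` contains exactly one element of `[2n] ∖ I`. -/
def Concordant {n : ℕ} (σ : NCP n) (I : Finset (Fin (2*n))) : Prop :=
  I.card = n - 1 ∧
  (∀ B ∈ σ.parts, ((B.image bar) ∩ (univ \ I)).card = 1) ∧
  (∀ i : Fin n, (((univ.filter (dualRel σ i)).image til) ∩ (univ \ I)).card = 1)

/-- `E(I)`: the set of noncrossing partitions concordant with `I`. -/
def ESet {n : ℕ} (I : Finset (Fin (2*n))) : Set (NCP n) :=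
  {σ | IsNoncrossing σ ∧ Concordant σ I}

/-- The maximal minor `Δ_I(X)` on the columns indexed by `I`, in increasing order. -/
def minorOn {k m : ℕ} (X : Matrix (Fin k) (Fin m) ℝ) (I : Finset (Fin m)) : ℝ :=
  if h : I.card = k then (X.submatrix id fun r => I.orderEmbOfFin h r).det else 0

/-- `X` is totally nonnegative: it has full rank `k` and all maximal minors are `≥ 0`. -/
def IsTNN {k m : ℕ} (X : Matrix (Fin k) (Fin m) ℝ) : Prop :=
  X.rank = k ∧ ∀ I : Finset (Fin m), I.card = k → 0 ≤ minorOn X I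

/-- `t` times the matrix unit `E_{p,q}` (0-based indices). -/
def matE (m : ℕ) (p q : ℕ) (t : ℝ) : Matrix (Fin m) (Fin m) ℝ :=
  Matrix.of fun r s => if (r:ℕ) = p ∧ (s:ℕ) = q then t else 0

/-- `x_i(t) = Id + t·E_{i,i+1}` (1-based index `i`). -/
def xB (m i : ℕ) (t : ℝ) : Matrix (Fin m) (Fin m) ℝ := 1 + matE m (i-1) i t

/-- `y_i(t) = Id + t·E_{i+1,i}` (1-based index `i`). -/
def yB (m i : ℕ) (t : ℝ) : Matrix (Fin m) (Fin m) ℝ := 1 + matE m i (i-1) t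

/-- `u_i(t) = x_i(t)·y_{i−1}(t)` (1-based index `i`). -/
def uB (m i : ℕ) (t : ℝ) : Matrix (Fin m) (Fin m) ℝ := xB m i t * yB m (i-1) t

/-- The columns of `X`, extended `n`-periodically to all integer indices (0-based). -/
def colP {k n : ℕ} (X : Matrix (Fin k) (Fin n) ℝ) (i : ℤ) : Fin k → ℝ :=
  fun r => if h : (i % (n:ℤ)).toNat < n then X r ⟨(i % (n:ℤ)).toNat, h⟩ else 0

/-- `f_X(i) = min { j ≥ i : v_i ∈ span(v_{i+1}, …, v_j) }` (0-based columns). -/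
def fX {k n : ℕ} (X : Matrix (Fin k) (Fin n) ℝ) (i : ℤ) : ℤ :=
  sInf {j : ℤ | i ≤ j ∧ colP X i ∈ Submodule.span ℝ (colP X '' Set.Ioc i j)}

/-- Fintype instance for finite partitions of a finite set. -/
instance {α : Type*} [DecidableEq α] [Fintype α] (s : Finset α) : Fintype (Finpartition s) :=
  Fintype.ofInjective Finpartition.parts fun _ _ h => Finpartition.ext h

/-- The sorted list of (the values of) a subset of `Fin m`. -/
def sortedL {m : ℕ} (I : Finset (Fin m)) : List ℕ :=
  (I.sort (· ≤ ·)).map Fin.val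

/-- The number of inversions of a list (= the number of adjacent transpositions
needed to sort it, when entries are distinct). -/
def invNum (l : List ℕ) : ℕ :=
  ((Finset.range l.length ×ˢ Finset.range l.length).filter fun pq =>
    pq.1 < pq.2 ∧ l.getD pq.2 0 < l.getD pq.1 0).card

/-- The subset of `Fin m` whose values lie in the list `l`. -/
def toFinF {m : ℕ} (l : List ℕ) : Finset (Fin m) :=
  univ.filter fun x => (x:ℕ) ∈ l

/-- The double sum `Σ_{σ ∈ E(l), κ ∈ E(l')} L σ · L κ`, where `E` of a list with a
repeated entry (or an out-of-range entry) is empty. -/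
def pairSum {n : ℕ} (L : NCP n → ℝ) (l l' : List ℕ) : ℝ :=
  if (l.Nodup ∧ ∀ x ∈ l, x < 2*n) ∧ (l'.Nodup ∧ ∀ x ∈ l', x < 2*n) then
    ∑ᶠ σ ∈ ESet (n := n) (toFinF l), ∑ᶠ κ ∈ ESet (n := n) (toFinF l'), L σ * L κ
  else 0

/-- The list obtained from `LI` by replacing its entries at the positions in `S`
(in increasing order of position) by the first `#S` entries of `LJ`. -/
def swapI (LI LJ : List ℕ) (S : Finset ℕ) : List ℕ :=
  (List.range LI.length).map fun p =>
    if p ∈ S then LJ.getD ((S.filter (· < p)).card) 0 else LI.getD p 0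

/-- The list obtained from `LJ` by replacing its first `#S` entries by the entries of
`LI` at the positions in `S`, in increasing order. -/
def swapJ (LI LJ : List ℕ) (S : Finset ℕ) : List ℕ :=
  (List.range LJ.length).map fun p =>
    if p < S.card then LI.getD ((S.sort (· ≤ ·)).getD p 0) 0 else LJ.getD p 0

section Stmt7Aux
variable {n : ℕ}

lemma addMul {f : ℤ → ℤ} {M : ℤ} (hf : ∀ i, f (i + M) = f i + M)
    (k i : ℤ) : f (i + k * M) = f i + k * M := by
  induction k using Int.induction_on with
  | zero => simp
  | succ k ih =>
      have h1 : i + ((k : ℤ) + 1) * M = (i + k * M) + M := by ring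
      rw [h1, hf, ih]; ring
  | pred k ih =>
      have h1 : (i + (-(k:ℤ) - 1) * M) + M = i + (-(k:ℤ)) * M := by ring
      have h2 := hf (i + (-(k:ℤ) - 1) * M)
      rw [h1, ih] at h2
      omega

lemma gTau_fin (hn : 0 < n) (τ : Fin (2*n) → Fin (2*n)) (i : Fin (2*n)) :
    gTau n τ ((i:ℕ):ℤ) = if i < τ i then ((τ i:ℕ):ℤ) else ((τ i:ℕ):ℤ) + 2*n := by
  have hx : ((i:ℕ):ℤ) % ((2*n:ℕ):ℤ) = ((i:ℕ):ℤ) :=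
    Int.emod_eq_of_lt (by positivity) (by exact_mod_cast i.isLt)
  unfold gTau
  simp only [hx, Int.toNat_natCast, Fin.eta, i.isLt, dif_pos]
  ring_nf

lemma gTau_period (hn : 0 < n) (τ : Fin (2*n) → Fin (2*n)) (x : ℤ) :
    gTau n τ (x + ((2*n:ℕ):ℤ)) = gTau n τ x + ((2*n:ℕ):ℤ) := by
  have h1 : (x + ((2*n:ℕ):ℤ)) % ((2*n:ℕ):ℤ) = x % ((2*n:ℕ):ℤ) := by simpa using Int.add_mul_emod_self_left (a:=x) (b:=((2*n:ℕ):ℤ)) (c:=1)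
  have h2 : (x % ((2*n:ℕ):ℤ)).toNat < 2*n := by
    have := Int.emod_lt_of_pos x (b := ((2*n:ℕ):ℤ)) (by positivity)
    omega
  unfold gTau
  rw [h1]
  rw [dif_pos h2, dif_pos h2]
  ring

lemma gTau_decomp (hn : 0 < n) (τ : Fin (2*n) → Fin (2*n)) (x : ℤ) :
    gTau n τ x = gTau n τ (x % ((2*n:ℕ):ℤ)) + (x - x % ((2*n:ℕ):ℤ)) := by
  have h := addMul (gTau_period hn τ) (x / ((2*n:ℕ):ℤ)) (x % ((2*n:ℕ):ℤ))
  have h2 : x % ((2*n:ℕ):ℤ) + x / ((2*n:ℕ):ℤ) * ((2*n:ℕ):ℤ) = x := Int.emod_add_ediv_mul x _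
  rw [h2] at h
  omega

lemma gTau_gg_fin (hn : 0 < n) {τ : Fin (2*n) → Fin (2*n)} (hτ : IsMatching τ)
    (i : Fin (2*n)) :
    gTau n τ (gTau n τ ((i:ℕ):ℤ)) = ((i:ℕ):ℤ) + 2*n := by
  rw [gTau_fin hn τ i]
  by_cases h : i < τ i
  · rw [if_pos h, gTau_fin hn τ (τ i)]
    rw [if_neg (by rw [hτ.1 i]; exact fun hc => absurd (lt_trans h hc) (lt_irrefl i)),
      hτ.1 i]
  · rw [if_neg h]
    have h2 : ((τ i:ℕ):ℤ) + 2*(n:ℤ) = ((τ i:ℕ):ℤ) + ((2*n:ℕ):ℤ) := by push_cast; ring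
    rw [h2, gTau_period hn τ, gTau_fin hn τ (τ i)]
    have hlt : τ i < i := lt_of_le_of_ne (not_lt.mp h) (hτ.2 i)
    rw [if_pos (by rw [hτ.1 i]; exact hlt), hτ.1 i]
    push_cast; ring

lemma gTau_gg (hn : 0 < n) {τ : Fin (2*n) → Fin (2*n)} (hτ : IsMatching τ)
    (x : ℤ) : gTau n τ (gTau n τ x) = x + 2*n := by
  set M : ℤ := ((2*n:ℕ):ℤ) with hM
  have hMpos : (0:ℤ) < M := by positivity
  have hr0 : 0 ≤ x % M := Int.emod_nonneg x (by omega)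
  have hrlt : x % M < M := Int.emod_lt_of_pos x hMpos
  have hfin : (x % M).toNat < 2*n := by omega
  set i : Fin (2*n) := ⟨(x % M).toNat, hfin⟩ with hi
  have hcast : ((i:ℕ):ℤ) = x % M := by simp [hi]; omega
  have hd := gTau_decomp hn τ x
  rw [hd, ← hcast]
  have hq2 : x - ((i:ℕ):ℤ) = (x / M) * M := by
    rw [hcast]
    have := Int.emod_add_ediv_mul x M
    linarith
  rw [hq2, addMul (gTau_period hn τ), gTau_gg_fin hn hτ i]
  simp only [hM] at hq2 ⊢
  linarith

lemma gTau_bounds (hn : 0 < n) {τ : Fin (2*n) → Fin (2*n)} (hτ : IsMatching τ)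
    (x : ℤ) : x + 1 ≤ gTau n τ x ∧ gTau n τ x ≤ x + 2*n - 1 := by
  set M : ℤ := ((2*n:ℕ):ℤ) with hM
  have hMpos : (0:ℤ) < M := by positivity
  have hr0 : 0 ≤ x % M := Int.emod_nonneg x (by omega)
  have hrlt : x % M < M := Int.emod_lt_of_pos x hMpos
  have hfin : (x % M).toNat < 2*n := by omega
  set i : Fin (2*n) := ⟨(x % M).toNat, hfin⟩ with hi
  have hcast : ((i:ℕ):ℤ) = x % M := by simp [hi]; omega
  have hd := gTau_decomp hn τ x
  rw [← hcast, gTau_fin hn τ i] at hd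
  have hlt : ((τ i : ℕ):ℤ) < M := by
    rw [hM]; exact_mod_cast (τ i).isLt
  have hge : (0:ℤ) ≤ ((τ i : ℕ):ℤ) := by positivity
  have hne : ((τ i:ℕ):ℤ) ≠ ((i:ℕ):ℤ) := by
    intro hc
    exact hτ.2 i (Fin.ext (by exact_mod_cast hc))
  have hMcast : (2*(n:ℤ)) = M := by rw [hM]; push_cast; ring
  by_cases h : i < τ i
  · rw [if_pos h] at hd
    have : ((i:ℕ):ℤ) < ((τ i:ℕ):ℤ) := by exact_mod_cast h
    omega
  · rw [if_neg h] at hd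
    have : ((τ i:ℕ):ℤ) ≤ ((i:ℕ):ℤ) := by exact_mod_cast not_lt.mp h
    omega

lemma card_lt_filter (hn : 0 < n) {τ : Fin (2*n) → Fin (2*n)} (hτ : IsMatching τ) :
    ((univ : Finset (Fin (2*n))).filter fun i => ¬ i < τ i).card = n := by
  have hcong : ((univ : Finset (Fin (2*n))).filter fun i => ¬ i < τ i)
      = (univ.filter fun i => τ i < i) := by
    apply Finset.filter_congr
    intro i _
    constructor
    · intro h; exact lt_of_le_of_ne (not_lt.mp h) (hτ.2 i)
    · intro h; exact not_lt.mpr (le_of_lt h)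
  rw [hcong]
  have hbij : (univ.filter fun i : Fin (2*n) => τ i < i).card
      = (univ.filter fun i : Fin (2*n) => i < τ i).card := by
    apply Finset.card_bij (fun i _ => τ i)
    · intro a ha
      simp only [mem_filter, mem_univ, true_and] at ha ⊢
      rw [hτ.1 a]; exact ha
    · intro a ha b hb hab
      have := congrArg τ hab
      rwa [hτ.1 a, hτ.1 b] at this
    · intro b hb
      simp only [mem_filter, mem_univ, true_and] at hb ⊢
      exact ⟨τ b, by rw [hτ.1 b]; exact hb, hτ.1 b⟩
  have htot := Finset.card_filter_add_card_filter_not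
    (s := (univ : Finset (Fin (2*n)))) (p := fun i => τ i < i)
  have hneg : (univ.filter fun i : Fin (2*n) => ¬ τ i < i).card
      = (univ.filter fun i : Fin (2*n) => i < τ i).card := by
    congr 1
    apply Finset.filter_congr
    intro i _
    constructor
    · intro h; exact lt_of_le_of_ne (not_lt.mp h) (Ne.symm (hτ.2 i))
    · intro h; exact not_lt.mpr (le_of_lt h)
  rw [hneg, ← hbij] at htot
  simp only [Finset.card_univ, Fintype.card_fin] at htot
  omega

lemma sum_gTau (hn : 0 < n) {τ : Fin (2*n) → Fin (2*n)} (hτ : IsMatching τ) :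
    ∑ i : Fin (2*n), (gTau n τ ((i:ℕ):ℤ) - ((i:ℕ):ℤ)) = 2*(n:ℤ)*n := by
  have h1 : ∀ i : Fin (2*n), gTau n τ ((i:ℕ):ℤ) - ((i:ℕ):ℤ)
      = (((τ i:ℕ):ℤ) - ((i:ℕ):ℤ)) + (if i < τ i then 0 else 2*(n:ℤ)) := by
    intro i
    rw [gTau_fin hn τ i]
    by_cases h : i < τ i
    · rw [if_pos h, if_pos h]; ring
    · rw [if_neg h, if_neg h]; ring
  rw [Finset.sum_congr rfl (fun i _ => h1 i), Finset.sum_add_distrib,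
    Finset.sum_sub_distrib]
  have h2 : ∑ i : Fin (2*n), ((τ i:ℕ):ℤ) = ∑ i : Fin (2*n), ((i:ℕ):ℤ) :=
    Equiv.sum_comp (Function.Involutive.toPerm τ hτ.1) (fun i : Fin (2*n) => ((i:ℕ):ℤ))
  rw [h2, sub_self, zero_add]
  rw [Finset.sum_ite, Finset.sum_const, Finset.sum_const, card_lt_filter hn hτ]
  simp
  ring

lemma fTau_electrical (hn : 0 < n) {τ : Fin (2*n) → Fin (2*n)} (hτ : IsMatching τ) :
    IsElectrical n (fTau n τ) := by
  have hMc : ((2*n:ℕ):ℤ) = 2*(n:ℤ) := by push_cast; ring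
  have hper : ∀ x : ℤ, gTau n τ (x + ((2*n:ℕ):ℤ)) = gTau n τ x + ((2*n:ℕ):ℤ) :=
    gTau_period hn τ
  refine ⟨⟨?_, ?_⟩, ?_, ?_, ?_⟩
  · -- bijective
    rw [Function.bijective_iff_has_inverse]
    refine ⟨fun y => gTau n τ (y+1) - ((2*n:ℕ):ℤ), ?_, ?_⟩
    · intro x
      simp only [fTau]
      rw [sub_add_cancel, gTau_gg hn hτ x, hMc]
      ring
    · intro y
      simp only [fTau]
      have h1 : gTau n τ (gTau n τ (y+1) - ((2*n:ℕ):ℤ))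
          = gTau n τ (gTau n τ (y+1)) - ((2*n:ℕ):ℤ) := by
        have h := addMul hper (-1) (gTau n τ (y+1))
        rw [show gTau n τ (y+1) + (-1)*((2*n:ℕ):ℤ)
            = gTau n τ (y+1) - ((2*n:ℕ):ℤ) by ring] at h
        rw [h]; ring
      rw [h1, gTau_gg hn hτ (y+1), hMc]
      ring
  · intro i
    simp only [fTau]
    rw [hper i]
    ring
  · intro i
    have := gTau_bounds hn hτ i
    simp only [fTau]
    omega
  · -- window sum
    have hsum : ∑ i ∈ Finset.range (2*n), (gTau n τ (((i:ℕ):ℤ)+1) - (((i:ℕ):ℤ)+1))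
        = 2*(n:ℤ)*n := by
      obtain ⟨m, hm⟩ : ∃ m, 2*n = m + 1 := ⟨2*n - 1, by omega⟩
      have hstep : ∀ i : ℕ, gTau n τ (((i:ℕ):ℤ)+1) - (((i:ℕ):ℤ)+1)
          = (fun j : ℕ => gTau n τ ((j:ℕ):ℤ) - ((j:ℕ):ℤ)) (i+1) := by
        intro i; push_cast; ring_nf
      rw [Finset.sum_congr rfl (fun i _ => hstep i)]
      have hfin := sum_gTau hn hτ
      rw [Fin.sum_univ_eq_sum_range (fun j : ℕ => gTau n τ ((j:ℕ):ℤ) - ((j:ℕ):ℤ)) (2*n)]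
        at hfin
      rw [hm] at hfin ⊢
      rw [Finset.sum_range_succ]
      rw [Finset.sum_range_succ'] at hfin
      have hlast : (fun j : ℕ => gTau n τ ((j:ℕ):ℤ) - ((j:ℕ):ℤ)) (m+1)
          = (fun j : ℕ => gTau n τ ((j:ℕ):ℤ) - ((j:ℕ):ℤ)) 0 := by
        simp only
        have h0 : (((m+1:ℕ)):ℤ) = 0 + ((2*n:ℕ):ℤ) := by push_cast; omega
        rw [h0, hper]
        push_cast
        ring
      rw [hlast]
      exact hfin
    have hws : windowSum (2*n) (fTau n τ)
        = (∑ i ∈ Finset.range (2*n), (gTau n τ (((i:ℕ):ℤ)+1) - (((i:ℕ):ℤ)+1)))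
          - (2*n : ℕ) := by
      unfold windowSum
      simp only [fTau]
      rw [show ∀ S : Finset ℕ, ∑ i ∈ S, (gTau n τ ((i:ℤ)+1) - 1 - ((i:ℤ)+1))
          = ∑ i ∈ S, ((gTau n τ ((i:ℤ)+1) - ((i:ℤ)+1)) - 1) from
          fun S => Finset.sum_congr rfl (fun i _ => by ring)]
      rw [Finset.sum_sub_distrib, Finset.sum_const, Finset.card_range]
      simp
    rw [hws, hsum]
    push_cast
    ring
  · intro i
    simp only [fTau]
    rw [sub_add_cancel, gTau_gg hn hτ i]
    have h2 : i + 2*(n:ℤ) - 1 - (i - 1) = ((2*n:ℕ):ℤ) := by rw [hMc]; ring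
    rw [h2, Int.emod_self]

lemma matching_unique (hn : 0 < n) {τ τ' : Fin (2*n) → Fin (2*n)}
    (hτ : IsMatching τ) (hτ' : IsMatching τ') (h : fTau n τ = fTau n τ') : τ = τ' := by
  funext i
  have h1 := congrFun h ((i:ℕ):ℤ)
  simp only [fTau] at h1
  have h2 : gTau n τ ((i:ℕ):ℤ) = gTau n τ' ((i:ℕ):ℤ) := by omega
  rw [gTau_fin hn τ i, gTau_fin hn τ' i] at h2
  have ha := (τ i).isLt
  have hb := (τ' i).isLt
  apply Fin.ext
  split_ifs at h2 <;> omega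

lemma electrical_exists (hn : 0 < n) {f : ℤ → ℤ} (hf : IsElectrical n f) :
    ∃ τ : Fin (2*n) → Fin (2*n), IsMatching τ ∧ f = fTau n τ := by
  obtain ⟨⟨hbij, hper⟩, hbd, hws, hmod⟩ := hf
  have hMpos : (0:ℤ) < ((2*n:ℕ):ℤ) := by positivity
  have hM2 : ((2*n:ℕ):ℤ) = 2*(n:ℤ) := by push_cast; ring
  set g : ℤ → ℤ := fun x => f x + 1 with hg
  have hgper : ∀ x, g (x + ((2*n:ℕ):ℤ)) = g x + ((2*n:ℕ):ℤ) := by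
    intro x; simp only [hg]; rw [hper]; ring
  have hgmul := addMul hgper
  have hgbd : ∀ x, x + 1 ≤ g x ∧ g x ≤ x + ((2*n:ℕ):ℤ) - 1 := by
    intro x
    have := hbd x
    simp only [hg]
    rw [hM2]
    omega
  have hgg : ∀ x, g (g x) = x + ((2*n:ℕ):ℤ) := by
    intro x
    have h1 := hmod x
    have h2 : g (g x) = f (f x + 1) + 1 := by simp only [hg]
    obtain ⟨k, hk⟩ := Int.dvd_of_emod_eq_zero h1
    have e1 : g (g x) - x = ((2*n:ℕ):ℤ) * k := by linarith [h2, hk]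
    have hb1 := hgbd x
    have hb2 := hgbd (g x)
    have hlow : 2 ≤ ((2*n:ℕ):ℤ) * k := by linarith [hb1.1, hb2.1]
    have hhigh : ((2*n:ℕ):ℤ) * k ≤ 2*((2*n:ℕ):ℤ) - 2 := by linarith [hb1.2, hb2.2]
    have hk1 : k = 1 := by
      by_contra hne
      rcases lt_or_gt_of_ne hne with hlt | hgt
      · have hk0 : k ≤ 0 := by omega
        nlinarith
      · have hk2 : 2 ≤ k := by omega
        nlinarith
    rw [hk1, mul_one] at e1
    linarith
  have hgm : ∀ i : Fin (2*n),
      0 ≤ g ((i:ℕ):ℤ) % ((2*n:ℕ):ℤ) ∧ g ((i:ℕ):ℤ) % ((2*n:ℕ):ℤ) < ((2*n:ℕ):ℤ) :=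
    fun i => ⟨Int.emod_nonneg _ (ne_of_gt hMpos), Int.emod_lt_of_pos _ hMpos⟩
  have htn : ∀ i : Fin (2*n), (g ((i:ℕ):ℤ) % ((2*n:ℕ):ℤ)).toNat < 2*n := by
    intro i
    have := hgm i
    omega
  set τ : Fin (2*n) → Fin (2*n) := fun i => ⟨(g ((i:ℕ):ℤ) % ((2*n:ℕ):ℤ)).toNat, htn i⟩
    with hτdef
  have hτval : ∀ i : Fin (2*n), ((τ i : ℕ) : ℤ) = g ((i:ℕ):ℤ) % ((2*n:ℕ):ℤ) := by
    intro i
    simp only [hτdef]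
    exact Int.toNat_of_nonneg (hgm i).1
  have hcasti : ∀ i : Fin (2*n), (0:ℤ) ≤ ((i:ℕ):ℤ) ∧ ((i:ℕ):ℤ) < ((2*n:ℕ):ℤ) := by
    intro i
    constructor
    · positivity
    · exact_mod_cast i.isLt
  have hinv : Function.Involutive τ := by
    intro i
    have hv := hτval i
    have hquot : ((τ i:ℕ):ℤ) = g ((i:ℕ):ℤ) + (-(g ((i:ℕ):ℤ) / ((2*n:ℕ):ℤ))) * ((2*n:ℕ):ℤ) := by
      rw [hv]
      have := Int.emod_add_mul_ediv (g ((i:ℕ):ℤ)) ((2*n:ℕ):ℤ)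
      linarith
    have h3 : g ((τ i:ℕ):ℤ)
        = ((i:ℕ):ℤ) + ((2*n:ℕ):ℤ) + (-(g ((i:ℕ):ℤ) / ((2*n:ℕ):ℤ))) * ((2*n:ℕ):ℤ) := by
      rw [hquot, hgmul, hgg]
    apply Fin.ext
    have hv2 := hτval (τ i)
    rw [h3] at hv2
    have hmodeq : (((i:ℕ):ℤ) + ((2*n:ℕ):ℤ)
        + (-(g ((i:ℕ):ℤ) / ((2*n:ℕ):ℤ))) * ((2*n:ℕ):ℤ)) % ((2*n:ℕ):ℤ) = ((i:ℕ):ℤ) := by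
      conv_lhs => rw [show ((i:ℕ):ℤ) + ((2*n:ℕ):ℤ)
          + (-(g ((i:ℕ):ℤ) / ((2*n:ℕ):ℤ))) * ((2*n:ℕ):ℤ)
          = ((i:ℕ):ℤ) + ((2*n:ℕ):ℤ) * (1 + (-(g ((i:ℕ):ℤ) / ((2*n:ℕ):ℤ)))) by ring]
      rw [Int.add_mul_emod_self_left]
      exact Int.emod_eq_of_lt (hcasti i).1 (hcasti i).2
    rw [hmodeq] at hv2
    exact_mod_cast hv2
  have hfp : ∀ i, τ i ≠ i := by
    intro i hc
    have hv := hτval i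
    rw [hc] at hv
    have hdvd : ((2*n:ℕ):ℤ) ∣ g ((i:ℕ):ℤ) - ((i:ℕ):ℤ) := by
      apply Int.dvd_of_emod_eq_zero
      rw [← Int.emod_eq_emod_iff_emod_sub_eq_zero, ← hv]
      exact (Int.emod_eq_of_lt (hcasti i).1 (hcasti i).2).symm
    obtain ⟨k, hk⟩ := hdvd
    have hb := hgbd ((i:ℕ):ℤ)
    have h1 : 1 ≤ ((2*n:ℕ):ℤ) * k := by linarith [hb.1]
    have h2 : ((2*n:ℕ):ℤ) * k ≤ ((2*n:ℕ):ℤ) - 1 := by linarith [hb.2]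
    rcases le_or_gt k 0 with h | h
    · nlinarith
    · have : 1 ≤ k := h
      nlinarith
  have hτm : IsMatching τ := ⟨hinv, hfp⟩
  refine ⟨τ, hτm, ?_⟩
  have key : ∀ i : Fin (2*n), gTau n τ ((i:ℕ):ℤ) = g ((i:ℕ):ℤ) := by
    intro i
    rw [gTau_fin hn τ i]
    have hv := hτval i
    have heq : g ((i:ℕ):ℤ)
        = ((2*n:ℕ):ℤ) * (g ((i:ℕ):ℤ) / ((2*n:ℕ):ℤ)) + ((τ i:ℕ):ℤ) := by
      rw [hv]
      linarith [Int.emod_add_mul_ediv (g ((i:ℕ):ℤ)) ((2*n:ℕ):ℤ)]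
    have hbi := hgbd ((i:ℕ):ℤ)
    have hci := hcasti i
    have hct := hcasti (τ i)
    by_cases h : i < τ i
    · rw [if_pos h]
      have hlt : ((i:ℕ):ℤ) < ((τ i:ℕ):ℤ) := by exact_mod_cast h
      have hq0 : g ((i:ℕ):ℤ) / ((2*n:ℕ):ℤ) = 0 := by
        rcases lt_trichotomy (g ((i:ℕ):ℤ) / ((2*n:ℕ):ℤ)) 0 with h' | h' | h'
        · have h'' : g ((i:ℕ):ℤ) / ((2*n:ℕ):ℤ) ≤ -1 := by
            linarith [Int.lt_iff_add_one_le.mp h']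
          have hm := mul_le_mul_of_nonneg_left h'' (le_of_lt hMpos)
          exfalso
          linarith [hm, heq, hbi.1, hct.2, hci.1]
        · exact h'
        · have h'' : 1 ≤ g ((i:ℕ):ℤ) / ((2*n:ℕ):ℤ) := h'
          have hm := mul_le_mul_of_nonneg_left h'' (le_of_lt hMpos)
          exfalso
          linarith [hm, heq, hbi.2, hlt]
      rw [hq0, mul_zero, zero_add] at heq
      linarith
    · rw [if_neg h]
      have hlt : ((τ i:ℕ):ℤ) < ((i:ℕ):ℤ) := by
        have h2 : τ i < i := lt_of_le_of_ne (not_lt.mp h) (hfp i)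
        exact_mod_cast Fin.lt_def.mp h2
      have hq1 : g ((i:ℕ):ℤ) / ((2*n:ℕ):ℤ) = 1 := by
        rcases lt_trichotomy (g ((i:ℕ):ℤ) / ((2*n:ℕ):ℤ)) 1 with h' | h' | h'
        · have h'' : g ((i:ℕ):ℤ) / ((2*n:ℕ):ℤ) ≤ 0 := by
            linarith [Int.lt_iff_add_one_le.mp h']
          have hm := mul_le_mul_of_nonneg_left h'' (le_of_lt hMpos)
          exfalso
          linarith [hm, heq, hbi.1, hlt]
        · exact h'
        · have h'' : 2 ≤ g ((i:ℕ):ℤ) / ((2*n:ℕ):ℤ) := by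
            linarith [Int.lt_iff_add_one_le.mp h']
          have hm := mul_le_mul_of_nonneg_left h'' (le_of_lt hMpos)
          exfalso
          linarith [hm, heq, hbi.2, hct.1, hci.2]
      rw [hq1, mul_one] at heq
      rw [← hM2]
      linarith
  funext x
  simp only [fTau]
  suffices hsuff : gTau n τ x = g x by
    simp only [hg] at hsuff
    omega
  have hr0 : 0 ≤ x % ((2*n:ℕ):ℤ) := Int.emod_nonneg x (ne_of_gt hMpos)
  have hrlt : x % ((2*n:ℕ):ℤ) < ((2*n:ℕ):ℤ) := Int.emod_lt_of_pos x hMpos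
  have hfin : (x % ((2*n:ℕ):ℤ)).toNat < 2*n := by omega
  set i : Fin (2*n) := ⟨(x % ((2*n:ℕ):ℤ)).toNat, hfin⟩ with hi
  have hcast : ((i:ℕ):ℤ) = x % ((2*n:ℕ):ℤ) := Int.toNat_of_nonneg hr0
  have hgx : g x = g ((i:ℕ):ℤ) + (x - x % ((2*n:ℕ):ℤ)) := by
    have h := hgmul (x / ((2*n:ℕ):ℤ)) (x % ((2*n:ℕ):ℤ))
    rw [Int.emod_add_ediv_mul x ((2*n:ℕ):ℤ)] at h
    rw [hcast]
    have h2 := Int.emod_add_ediv_mul x ((2*n:ℕ):ℤ)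
    linarith [h]
  rw [gTau_decomp hn τ x, hgx, ← hcast, key i]

end Stmt7Aux

theorem stmt7 (n : ℕ) (hn : 0 < n) (f : ℤ → ℤ) :
    IsElectrical n f ↔
      ∃! τ : Fin (2*n) → Fin (2*n), IsMatching τ ∧ f = fTau n τ := by
  constructor
  · intro hf
    obtain ⟨τ, hτ, hfeq⟩ := electrical_exists hn hf
    refine ⟨τ, ⟨hτ, hfeq⟩, ?_⟩
    intro τ' h'
    exact matching_unique hn h'.1 hτ (h'.2.symm.trans hfeq)
  · rintro ⟨τ, ⟨hτ, hfeq⟩, -⟩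
    rw [hfeq]
    exact fTau_electrical hn hτ

end
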